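/- Let s, m, n, t be integers with s ≥ 1 and n ≥ m ≥ t ≥ 0, and let C_1, …, C_s ∈ 𝔽₂^{n×m} be generating matrices of a digital (t, m, s)-net in base 2: for every choice of nonnegative integers d_1, …, d_s with d_1 + ⋯ + d_s = m − t and every choice of integers a_1, …, a_s with 0 ≤ a_i < 2^{d_i}, the number of h ∈ 𝔽₂^m with x_h ∈ Π_{i=1}^s [a_i·2^{−d_i}, (a_i+1)·2^{−d_i}) is exactly 2^t. Then for any invertible lower triangular matrices L_1, …, L_s ∈ 𝔽₂^{n×n}, the digital net with generating matrices L_1·C_1, …, L_s·C_s is also a (t, m, s)-net: for every such choice of d_1, …, d_s and a_1, …, a_s, the number of h ∈ 𝔽₂^m whose scrambled point (with i-th coordinate Σ_{j=1}^n (L_i C_i h)_j · 2^{−j}) lies in Π_{i=1}^s [a_i·2^{−d_i}, (a_i+1)·2^{−d_i}) is exactly 2^t. -/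

import Mathlib

open scoped Classical

namespace Scramble

/-- most-significant-first binary value of the first `d` digits. -/
def W (d : ℕ) (y : ℕ → ZMod 2) : ℕ := ∑ j ∈ Finset.range d, (y j).val * 2 ^ (d - 1 - j)

lemma W_succ (d : ℕ) (y : ℕ → ZMod 2) :
    W (d + 1) y = W d (fun j => y (j + 1)) + (y 0).val * 2 ^ d := by
  unfold W
  rw [Finset.sum_range_succ']
  congr 1
  · apply Finset.sum_congr rfl
    intro j hj
    have hj' := Finset.mem_range.mp hj
    congr 2
    omega

lemma W_lt (d : ℕ) (y : ℕ → ZMod 2) : W d y < 2 ^ d := by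
  induction d generalizing y with
  | zero => simp [W]
  | succ d ih =>
    rw [W_succ]
    have h1 : (y 0).val < 2 := ZMod.val_lt (y 0)
    have h2 := ih (fun j => y (j + 1))
    have : (y 0).val * 2 ^ d ≤ 1 * 2 ^ d := Nat.mul_le_mul_right _ (by omega)
    calc W d (fun j => y (j+1)) + (y 0).val * 2 ^ d < 2 ^ d + (y 0).val * 2 ^ d := by omega
      _ ≤ 2 ^ d + 2 ^ d := by omega
      _ = 2 ^ (d + 1) := by ring

lemma W_congr {d : ℕ} {y z : ℕ → ZMod 2} (h : ∀ j < d, y j = z j) : W d y = W d z := by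
  unfold W
  apply Finset.sum_congr rfl
  intro j hj
  rw [h j (Finset.mem_range.mp hj)]

lemma W_inj {d : ℕ} {y z : ℕ → ZMod 2} (h : W d y = W d z) : ∀ j < d, y j = z j := by
  induction d generalizing y z with
  | zero => omega
  | succ d ih =>
    rw [W_succ, W_succ] at h
    have b1 : (y 0).val < 2 := ZMod.val_lt (y 0)
    have b2 : (z 0).val < 2 := ZMod.val_lt (z 0)
    have l1 := W_lt d (fun j => y (j + 1))
    have l2 := W_lt d (fun j => z (j + 1))
    have hv : (y 0).val = (z 0).val ∧ W d (fun j => y (j+1)) = W d (fun j => z (j+1)) := by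
      interval_cases h1 : (y 0).val <;> interval_cases h2 : (z 0).val <;> omega
    intro j hj
    match j with
    | 0 => exact ZMod.val_injective 2 hv.1
    | (k+1) => exact ih hv.2 k (by omega)

lemma W_exists {d a : ℕ} (ha : a < 2 ^ d) : ∃ y : ℕ → ZMod 2, W d y = a := by
  induction d generalizing a with
  | zero => exact ⟨fun _ => 0, by simp [W]; omega⟩
  | succ d ih =>
    have hpos : 0 < 2 ^ d := Nat.pow_pos (by norm_num)
    have ha' : a % 2 ^ d < 2 ^ d := Nat.mod_lt _ hpos
    obtain ⟨y', hy'⟩ := ih ha'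
    have hb : a / 2 ^ d < 2 := by
      apply (Nat.div_lt_iff_lt_mul hpos).mpr
      rw [pow_succ] at ha
      omega
    have hval : (((a / 2 ^ d : ℕ) : ZMod 2)).val = a / 2 ^ d := ZMod.val_cast_of_lt hb
    refine ⟨fun j => if j = 0 then ((a / 2 ^ d : ℕ) : ZMod 2) else y' (j - 1), ?_⟩
    have key : W (d + 1) (fun j => if j = 0 then ((a / 2 ^ d : ℕ) : ZMod 2) else y' (j - 1))
        = W d y' + (a / 2 ^ d) * 2 ^ d := by
      rw [W_succ]
      have h0 : (if (0:ℕ) = 0 then ((a / 2 ^ d : ℕ) : ZMod 2) else y' (0 - 1))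
          = ((a / 2 ^ d : ℕ) : ZMod 2) := by simp
      rw [h0, hval]
      congr 1
    rw [key, hy', Nat.mod_add_div']

lemma W_split {d n : ℕ} (hd : d ≤ n) (y : ℕ → ZMod 2) :
    W n y = W d y * 2 ^ (n - d) + W (n - d) (fun k => y (d + k)) := by
  have h1 : W n y = ∑ j ∈ Finset.range d, (y j).val * 2 ^ (n - 1 - j)
      + ∑ j ∈ Finset.Ico d n, (y j).val * 2 ^ (n - 1 - j) := by
    unfold W
    rw [Finset.range_eq_Ico, ← Finset.sum_Ico_consecutive _ (Nat.zero_le d) hd, Finset.range_eq_Ico]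
  rw [h1]
  congr 1
  · unfold W
    rw [Finset.sum_mul]
    apply Finset.sum_congr rfl
    intro j hj
    have hj' := Finset.mem_range.mp hj
    have he : n - 1 - j = (d - 1 - j) + (n - d) := by omega
    rw [he, pow_add, mul_assoc]
  · unfold W
    rw [Finset.sum_Ico_eq_sum_range]
    apply Finset.sum_congr rfl
    intro k hk
    have hk' := Finset.mem_range.mp hk
    have he : n - 1 - (d + k) = (n - d) - 1 - k := by omega
    rw [he]


/-- extend a `Fin k`-indexed vector by zero. -/
def ext {k : ℕ} (v : Fin k → ZMod 2) : ℕ → ZMod 2 := fun j => if h : j < k then v ⟨j, h⟩ else 0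

lemma sum_eq_W (n : ℕ) (v : Fin n → ZMod 2) :
    ∑ j : Fin n, ((v j).val : ℝ) * (2:ℝ) ^ (-((j : ℕ) + 1 : ℤ))
      = (W n (ext v) : ℝ) * (2:ℝ) ^ (-(n : ℤ)) := by
  have hL : ∑ j : Fin n, ((v j).val : ℝ) * (2:ℝ) ^ (-((j : ℕ) + 1 : ℤ))
      = ∑ j ∈ Finset.range n, ((ext v j).val : ℝ) * (2:ℝ) ^ (-((j : ℕ) + 1 : ℤ)) := by
    rw [← Fin.sum_univ_eq_sum_range (fun j => ((ext v j).val : ℝ) * (2:ℝ) ^ (-((j:ℕ)+1:ℤ))) n]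
    apply Finset.sum_congr rfl
    intro j _
    congr 3
    simp [ext, j.isLt]
  rw [hL]
  unfold W
  push_cast
  rw [Finset.sum_mul]
  apply Finset.sum_congr rfl
  intro j hj
  have hj' := Finset.mem_range.mp hj
  rw [mul_assoc]
  congr 1
  rw [← zpow_natCast (2:ℝ) (n - 1 - j), ← zpow_add₀ (by norm_num : (2:ℝ) ≠ 0)]
  congr 1
  omega

lemma cast_le_iff {b V n d : ℕ} (hd : d ≤ n) :
    ((b : ℝ) * (2:ℝ) ^ (-(d : ℤ)) ≤ (V : ℝ) * (2:ℝ) ^ (-(n : ℤ))) ↔ b * 2 ^ (n - d) ≤ V := by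
  have h2 : (0:ℝ) < (2:ℝ) ^ (n : ℤ) := by positivity
  have e1 : (2:ℝ) ^ (-(d:ℤ)) * (2:ℝ) ^ (n:ℤ) = ((2 ^ (n - d) : ℕ) : ℝ) := by
    rw [← zpow_add₀ (by norm_num : (2:ℝ) ≠ 0)]
    push_cast
    rw [← zpow_natCast (2:ℝ) (n - d)]
    congr 1
    omega
  have e2 : (2:ℝ) ^ (-(n:ℤ)) * (2:ℝ) ^ (n:ℤ) = 1 := by
    rw [← zpow_add₀ (by norm_num : (2:ℝ) ≠ 0)]
    simp
  rw [← mul_le_mul_iff_of_pos_right h2, mul_assoc, mul_assoc, e1, e2, mul_one]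
  exact_mod_cast Iff.rfl

lemma cast_lt_iff {b V n d : ℕ} (hd : d ≤ n) :
    ((V : ℝ) * (2:ℝ) ^ (-(n : ℤ)) < (b : ℝ) * (2:ℝ) ^ (-(d : ℤ))) ↔ V < b * 2 ^ (n - d) := by
  have h2 : (0:ℝ) < (2:ℝ) ^ (n : ℤ) := by positivity
  have e1 : (2:ℝ) ^ (-(d:ℤ)) * (2:ℝ) ^ (n:ℤ) = ((2 ^ (n - d) : ℕ) : ℝ) := by
    rw [← zpow_add₀ (by norm_num : (2:ℝ) ≠ 0)]
    push_cast
    rw [← zpow_natCast (2:ℝ) (n - d)]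
    congr 1
    omega
  have e2 : (2:ℝ) ^ (-(n:ℤ)) * (2:ℝ) ^ (n:ℤ) = 1 := by
    rw [← zpow_add₀ (by norm_num : (2:ℝ) ≠ 0)]
    simp
  rw [← mul_lt_mul_iff_of_pos_right h2, mul_assoc, mul_assoc, e1, e2, mul_one]
  exact_mod_cast Iff.rfl

lemma nat_window_iff {n d a : ℕ} (hd : d ≤ n) (y : ℕ → ZMod 2) :
    (a * 2 ^ (n - d) ≤ W n y ∧ W n y < (a + 1) * 2 ^ (n - d)) ↔ W d y = a := by
  have hsplit := W_split hd y
  set B := 2 ^ (n - d) with hB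
  set R := W (n - d) (fun k => y (d + k)) with hR
  have hRB : R < B := W_lt _ _
  set Wd := W d y with hWd
  constructor
  · rintro ⟨h1, h2⟩
    have hlt1 : a * B < (Wd + 1) * B := by
      calc a * B ≤ Wd * B + R := by omega
        _ < (Wd + 1) * B := by rw [add_mul, one_mul]; omega
    have hlt2 : Wd * B < (a + 1) * B := by
      calc Wd * B ≤ W n y := by omega
        _ < (a + 1) * B := h2
    have hBpos : 0 < B := Nat.pow_pos (by norm_num)
    have g1 : a < Wd + 1 := Nat.lt_of_mul_lt_mul_right hlt1
    have g2 : Wd < a + 1 := Nat.lt_of_mul_lt_mul_right hlt2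
    omega
  · intro h
    subst h
    constructor
    · omega
    · rw [hsplit, add_mul, one_mul]
      omega

lemma interval_iff {n d a : ℕ} (hd : d ≤ n) (v : Fin n → ZMod 2) :
    ((a : ℝ) * (2:ℝ) ^ (-(d : ℤ)) ≤
        ∑ j : Fin n, ((v j).val : ℝ) * (2:ℝ) ^ (-((j : ℕ) + 1 : ℤ)) ∧
      ∑ j : Fin n, ((v j).val : ℝ) * (2:ℝ) ^ (-((j : ℕ) + 1 : ℤ)) <
        ((a : ℝ) + 1) * (2:ℝ) ^ (-(d : ℤ)))
    ↔ W d (ext v) = a := by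
  rw [sum_eq_W]
  rw [← nat_window_iff (a := a) hd (ext v)]
  constructor
  · rintro ⟨h1, h2⟩
    refine ⟨(cast_le_iff hd).mp h1, (cast_lt_iff (b := a + 1) hd).mp ?_⟩
    push_cast
    exact h2
  · rintro ⟨h1, h2⟩
    refine ⟨(cast_le_iff hd).mpr h1, ?_⟩
    have := (cast_lt_iff (b := a + 1) hd).mpr h2
    push_cast at this
    exact this


lemma sum_restrict {n d : ℕ} (hd : d ≤ n) (f : Fin n → ZMod 2)
    (hf : ∀ k : Fin n, d ≤ (k : ℕ) → f k = 0) :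
    ∑ k : Fin n, f k = ∑ k : Fin d, f (Fin.castLE hd k) := by
  classical
  have : ∑ k : Fin d, f (Fin.castLE hd k)
      = ∑ k ∈ Finset.univ.map ⟨Fin.castLE hd, Fin.castLE_injective hd⟩, f k := by
    rw [Finset.sum_map]
    rfl
  rw [this]
  symm
  apply Finset.sum_subset (Finset.subset_univ _)
  intro k _ hk
  apply hf
  by_contra hlt
  push_neg at hlt
  exact hk (Finset.mem_map.mpr ⟨⟨(k : ℕ), hlt⟩, Finset.mem_univ _, by ext; simp⟩)

lemma trunc_mulVec {n d : ℕ} (hd : d ≤ n) (Lm : Matrix (Fin n) (Fin n) (ZMod 2))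
    (hlow : ∀ a b : Fin n, a < b → Lm a b = 0) (v : Fin n → ZMod 2) :
    (fun j : Fin d => (Lm.mulVec v) (Fin.castLE hd j))
      = (Lm.submatrix (Fin.castLE hd) (Fin.castLE hd)).mulVec
          (fun k : Fin d => v (Fin.castLE hd k)) := by
  funext j
  simp only [Matrix.mulVec, dotProduct, Matrix.submatrix_apply]
  apply sum_restrict hd
  intro k hk
  have hjk : Fin.castLE hd j < k := by
    rw [Fin.lt_def]
    simp only [Fin.coe_castLE]
    exact lt_of_lt_of_le j.isLt hk
  rw [hlow _ _ hjk, zero_mul]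

lemma diag_ne_zero {n : ℕ} (Lm : Matrix (Fin n) (Fin n) (ZMod 2)) (hu : IsUnit Lm)
    (hlow : ∀ a b : Fin n, a < b → Lm a b = 0) (k : Fin n) : Lm k k ≠ 0 := by
  have hdet : IsUnit Lm.det := (Matrix.isUnit_iff_isUnit_det Lm).mp hu
  have htri : Lm.BlockTriangular OrderDual.toDual := by
    intro i j hij
    exact hlow i j hij
  rw [Matrix.det_of_lowerTriangular Lm htri] at hdet
  have hne : (∏ i : Fin n, Lm i i) ≠ 0 := hdet.ne_zero
  exact Finset.prod_ne_zero_iff.mp hne k (Finset.mem_univ k)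

lemma ext_trunc {n k : ℕ} (hk : k ≤ n) (w : Fin n → ZMod 2) :
    W k (ext w) = W k (ext (fun j : Fin k => w (Fin.castLE hk j))) := by
  apply W_congr
  intro j hj
  simp [ext, hj, lt_of_lt_of_le hj hk]

lemma WF_inj {k : ℕ} {p q : Fin k → ZMod 2} (h : W k (ext p) = W k (ext q)) : p = q := by
  funext j
  have := W_inj h j j.isLt
  simpa [ext, j.isLt] using this

end Scramble

/-- The number of parameter vectors `h ∈ 𝔽₂^m` whose digital net point (generated by the
matrices `C i`, with `i`-th coordinate `Σ_{j=1}^n (C_i h)_j 2^{−j}`; a column index `j : Fin n`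
corresponds to the paper's `j.val + 1`) lies in the elementary interval
`Π_i [a_i 2^{−d_i}, (a_i+1) 2^{−d_i})`. -/
noncomputable def digitalNetIntervalCount (s m n : ℕ)
    (C : Fin s → Matrix (Fin n) (Fin m) (ZMod 2))
    (d : Fin s → ℕ) (a : Fin s → ℕ) : ℕ :=
  (Finset.univ.filter fun h : Fin m → ZMod 2 =>
    ∀ i : Fin s,
      (a i : ℝ) * (2 : ℝ) ^ (-(d i : ℤ)) ≤
          ∑ j : Fin n, ((Matrix.mulVec (C i) h) j).val * (2 : ℝ) ^ (-((j : ℕ) + 1 : ℤ)) ∧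
        ∑ j : Fin n, ((Matrix.mulVec (C i) h) j).val * (2 : ℝ) ^ (-((j : ℕ) + 1 : ℤ)) <
          ((a i : ℝ) + 1) * (2 : ℝ) ^ (-(d i : ℤ))).card

/-- Linear scrambling by invertible lower triangular matrices preserves the digital
`(t,m,s)`-net property: if every elementary interval of volume `2^{t−m}` contains exactly
`2^t` points of the digital net generated by `C 1, …, C s`, then the same holds for the
digital net generated by `L 1 * C 1, …, L s * C s`. -/
theorem linear_scrambling_preserves_net (s m n t : ℕ)
    (hs : 1 ≤ s) (hmn : m ≤ n) (htm : t ≤ m)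
    (C : Fin s → Matrix (Fin n) (Fin m) (ZMod 2))
    (hC : ∀ d : Fin s → ℕ, ∀ a : Fin s → ℕ, (∑ i, d i) = m - t → (∀ i, a i < 2 ^ d i) →
      digitalNetIntervalCount s m n C d a = 2 ^ t)
    (L : Fin s → Matrix (Fin n) (Fin n) (ZMod 2))
    (hL : ∀ i, IsUnit (L i))
    (hlow : ∀ i, ∀ a b : Fin n, a < b → L i a b = 0) :
    ∀ d : Fin s → ℕ, ∀ a : Fin s → ℕ, (∑ i, d i) = m - t → (∀ i, a i < 2 ^ d i) →
      digitalNetIntervalCount s m n (fun i => L i * C i) d a = 2 ^ t := by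
  classical
  intro d a hd ha
  have hdn : ∀ i, d i ≤ n := by
    intro i
    have h1 : d i ≤ ∑ j, d j :=
      Finset.single_le_sum (fun j _ => Nat.zero_le (d j)) (Finset.mem_univ i)
    rw [hd] at h1
    omega
  -- the truncated scrambling matrices
  set M : (i : Fin s) → Matrix (Fin (d i)) (Fin (d i)) (ZMod 2) :=
    fun i => (L i).submatrix (Fin.castLE (hdn i)) (Fin.castLE (hdn i)) with hM
  have hMdet : ∀ i, IsUnit (M i).det := by
    intro i
    have htri : (M i).BlockTriangular OrderDual.toDual := by
      intro j k hjk
      have hjk' : j < k := OrderDual.toDual_lt_toDual.mp hjk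
      show L i (Fin.castLE (hdn i) j) (Fin.castLE (hdn i) k) = 0
      apply hlow
      rw [Fin.lt_def] at hjk' ⊢
      exact hjk' 
    rw [Matrix.det_of_lowerTriangular (M i) htri]
    rw [isUnit_iff_ne_zero, Finset.prod_ne_zero_iff]
    intro k _
    exact Scramble.diag_ne_zero (L i) (hL i) (hlow i) _
  have hbij : ∀ i, Function.Bijective (fun p : Fin (d i) → ZMod 2 => (M i).mulVec p) := by
    intro i
    apply Finite.injective_iff_bijective.mp
    intro p q hpq
    have h2 := congrArg (Matrix.mulVec (M i)⁻¹) hpq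
    simp only [Matrix.mulVec_mulVec, Matrix.nonsing_inv_mul _ (hMdet i),
      Matrix.one_mulVec] at h2
    exact h2
  set e : (i : Fin s) → ((Fin (d i) → ZMod 2) ≃ (Fin (d i) → ZMod 2)) :=
    fun i => Equiv.ofBijective _ (hbij i) with he
  -- digits of a
  have hbex : ∀ i, ∃ y : ℕ → ZMod 2, Scramble.W (d i) y = a i := fun i => Scramble.W_exists (ha i)
  choose b hb using hbex
  set p : (i : Fin s) → (Fin (d i) → ZMod 2) := fun i j => b i j with hp
  set q : (i : Fin s) → (Fin (d i) → ZMod 2) := fun i => (e i).symm (p i) with hq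
  set a' : Fin s → ℕ := fun i => Scramble.W (d i) (Scramble.ext (q i)) with ha'def
  have ha' : ∀ i, a' i < 2 ^ d i := fun i => Scramble.W_lt _ _
  have hap : ∀ i, Scramble.W (d i) (Scramble.ext (p i)) = a i := by
    intro i
    rw [← hb i]
    apply Scramble.W_congr
    intro j hj
    simp [Scramble.ext, hj, p]
  -- the pointwise equivalence of the two membership conditions
  have main : ∀ (h : Fin m → ZMod 2) (i : Fin s),
      Scramble.W (d i) (Scramble.ext (Matrix.mulVec (L i * C i) h)) = a i ↔
      Scramble.W (d i) (Scramble.ext (Matrix.mulVec (C i) h)) = a' i := by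
    intro h i
    set y : Fin n → ZMod 2 := Matrix.mulVec (C i) h with hy
    have step1 : Matrix.mulVec (L i * C i) h = Matrix.mulVec (L i) y :=
      (Matrix.mulVec_mulVec h (L i) (C i)).symm
    rw [step1, Scramble.ext_trunc (hdn i), Scramble.trunc_mulVec (hdn i) (L i) (hlow i) y]
    rw [← hap i]
    constructor
    · intro hW
      have h1 : (M i).mulVec (fun k : Fin (d i) => y (Fin.castLE (hdn i) k)) = p i :=
        Scramble.WF_inj hW
      have h2 : (fun k : Fin (d i) => y (Fin.castLE (hdn i) k)) = q i := by
        rw [hq]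
        apply (Equiv.eq_symm_apply (e i)).mpr
        exact h1
      rw [Scramble.ext_trunc (hdn i), h2]
    · intro hW
      have h2 : (fun k : Fin (d i) => y (Fin.castLE (hdn i) k)) = q i := by
        apply Scramble.WF_inj
        rw [← Scramble.ext_trunc (hdn i)]
        exact hW
      have h1 : (M i).mulVec (fun k : Fin (d i) => y (Fin.castLE (hdn i) k)) = p i := by
        rw [h2, hq]
        exact (e i).apply_symm_apply (p i)
      rw [h1]
  -- conclude
  rw [← hC d a' hd ha']
  unfold digitalNetIntervalCount
  congr 1
  apply Finset.filter_congr
  intro h _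
  constructor
  · intro hcond i
    exact (Scramble.interval_iff (hdn i) _).mpr
      ((main h i).mp ((Scramble.interval_iff (hdn i) _).mp (hcond i)))
  · intro hcond i
    exact (Scramble.interval_iff (hdn i) _).mpr
      ((main h i).mpr ((Scramble.interval_iff (hdn i) _).mp (hcond i)))
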